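/- Let τ, γ, n, φ, ξ, α be real numbers with n ≠ 0, α ≠ 0 and ξφ ≠ 0, and set δ = n(-1 + ξn(1-φ) + ξφα - α)/(ξφα). Then the equation 2τα - γδ + 2τξ(1/n)φα²δ - ταδ = 0 holds if and only if α satisfies the cubic equation (2τξφ(1-ξφ))α³ + (τξnφ - 2τξ²nφ(1-φ) - τn)α² + (-n(τ+γ) + τξn²(1-φ) + γξnφ)α + (γξn²(1-φ) - γn) = 0. -/

import Mathlib

lemma cubic_key (τ γ n φ ξ α : ℝ) :
  ((2 * τ * α * (ξ * φ * α) - γ * (n * (-1 + ξ * n * (1 - φ) + ξ * φ * α - α))) * (n * (ξ * φ * α)) +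
          2 * τ * ξ * φ * α ^ 2 * (n * (-1 + ξ * n * (1 - φ) + ξ * φ * α - α)) * (ξ * φ * α)) *
        (ξ * φ * α) -
      ξ * φ * α * (n * (ξ * φ * α)) * (τ * α * (n * (-1 + ξ * n * (1 - φ) + ξ * φ * α - α))) =
  (2 * τ * ξ * φ * (1 - ξ * φ) * α ^ 3 + (τ * ξ * n * φ - 2 * τ * ξ ^ 2 * n * φ * (1 - φ) - τ * n) * α ^ 2 +
        (-n * (τ + γ) + τ * ξ * n ^ 2 * (1 - φ) + γ * ξ * n * φ) * α +
      (γ * ξ * n ^ 2 * (1 - φ) - γ * n)) * (-(n * (ξ * φ * α) ^ 2)) := by ring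

/-- With δ = n(-1 + ξn(1-φ) + ξφα - α)/(ξφα), the steady-state equation
2τα - γδ + 2τξ(1/n)φα²δ - ταδ = 0 holds iff α satisfies the cubic equation
for the simple-closure quasi-equilibrium. -/
theorem cubic_equation_for_alpha_simple_closure
    (τ γ n φ ξ α : ℝ) (hn : n ≠ 0) (hα : α ≠ 0) (hξφ : ξ * φ ≠ 0) :
    let δ := n * (-1 + ξ * n * (1 - φ) + ξ * φ * α - α) / (ξ * φ * α)
    (2 * τ * α - γ * δ + 2 * τ * ξ * (1 / n) * φ * α ^ 2 * δ - τ * α * δ = 0 ↔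
      (2 * τ * ξ * φ * (1 - ξ * φ)) * α ^ 3
        + (τ * ξ * n * φ - 2 * τ * ξ ^ 2 * n * φ * (1 - φ) - τ * n) * α ^ 2
        + (-n * (τ + γ) + τ * ξ * n ^ 2 * (1 - φ) + γ * ξ * n * φ) * α
        + (γ * ξ * n ^ 2 * (1 - φ) - γ * n) = 0) := by
  intro δ
  have hne : -(n * (ξ * φ * α) ^ 2) ≠ 0 := by
    simp only [neg_ne_zero]
    exact mul_ne_zero hn (pow_ne_zero 2 (mul_ne_zero hξφ hα))
  constructor <;> intro h
  · have h2 := h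
    have e : n * (ξ * φ * α) ^ 3 * (2 * τ * α - γ * δ + 2 * τ * ξ * (1 / n) * φ * α ^ 2 * δ - τ * α * δ) =
        (2 * τ * ξ * φ * (1 - ξ * φ) * α ^ 3 + (τ * ξ * n * φ - 2 * τ * ξ ^ 2 * n * φ * (1 - φ) - τ * n) * α ^ 2 +
          (-n * (τ + γ) + τ * ξ * n ^ 2 * (1 - φ) + γ * ξ * n * φ) * α +
        (γ * ξ * n ^ 2 * (1 - φ) - γ * n)) * (-(n * (ξ * φ * α) ^ 2)) := by
      rw [← cubic_key]; simp only [δ]; have hξ := left_ne_zero_of_mul hξφ; have hφ := right_ne_zero_of_mul hξφ; field_simp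
    rw [h2, mul_zero] at e
    replace h2 := e.symm
    exact (mul_eq_zero.1 h2).resolve_right hne
  · show 2 * τ * α - γ * δ + 2 * τ * ξ * (1 / n) * φ * α ^ 2 * δ - τ * α * δ = 0
    have e : n * (ξ * φ * α) ^ 3 * (2 * τ * α - γ * δ + 2 * τ * ξ * (1 / n) * φ * α ^ 2 * δ - τ * α * δ) =
        (2 * τ * ξ * φ * (1 - ξ * φ) * α ^ 3 + (τ * ξ * n * φ - 2 * τ * ξ ^ 2 * n * φ * (1 - φ) - τ * n) * α ^ 2 +
          (-n * (τ + γ) + τ * ξ * n ^ 2 * (1 - φ) + γ * ξ * n * φ) * α +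
        (γ * ξ * n ^ 2 * (1 - φ) - γ * n)) * (-(n * (ξ * φ * α) ^ 2)) := by
      rw [← cubic_key]; simp only [δ]; have hξ := left_ne_zero_of_mul hξφ; have hφ := right_ne_zero_of_mul hξφ; field_simp
    rw [h, zero_mul] at e
    exact (mul_eq_zero.1 e).resolve_left (mul_ne_zero hn (pow_ne_zero 3 (mul_ne_zero hξφ hα)))
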